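/- For all integers n ≥ 2 and m ≥ 0 the following identity of rational numbers holds: (Π_{k=1}^{n−2} Cat_k) · Π_{1 ≤ i < j ≤ n−1} (2m + i + j + 1)/(i + j − 1) = Π_{j=m+1}^{m+n−2} (1/(2j+1)) · C(n+m+j, 2j), where Cat_k = (1/(k+1))·C(2k,k) is the k-th Catalan number and C(a,b) is the binomial coefficient. -/

import Mathlib

open Finset

lemma fact_prod (a k : ℕ) :
    a.factorial * ∏ i ∈ Finset.range k, (a + 1 + i) = (a + k).factorial := by
  induction k with
  | zero => simp
  | succ k ih =>
      rw [Finset.prod_range_succ, ← mul_assoc, ih, show a + (k+1) = (a+k)+1 by ring,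
        Nat.factorial_succ]
      ring

lemma hstep (p m : ℕ) :
    (1/(((p+1 : ℕ):ℚ)+1) * (((2*(p+1)).choose (p+1) : ℕ) : ℚ)) *
      ∏ i ∈ Finset.Icc 1 (p+1), (((2*m+i+(p+2)+1 : ℕ):ℚ)/((i+(p+2)-1 : ℕ):ℚ))
    = ((m:ℚ)+p+2) *
      ∏ j ∈ Finset.Icc (m+1) (m+p), (((p+m+j+3 : ℕ):ℚ)/((p+3+m-j : ℕ):ℚ)) := by
  rw [show (((p+1 : ℕ):ℚ)) = (p:ℚ)+1 from by push_cast; ring,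
    show 2*(p+1) = 2*p+2 from by ring, Finset.prod_div_distrib, Finset.prod_div_distrib,
    ← Nat.cast_prod, ← Nat.cast_prod, ← Nat.cast_prod, ← Nat.cast_prod]
  set N1 := ∏ i ∈ Finset.Icc 1 (p+1), (2*m+i+(p+2)+1) with hN1
  set D1 := ∏ i ∈ Finset.Icc 1 (p+1), (i+(p+2)-1) with hD1
  set N2 := ∏ j ∈ Finset.Icc (m+1) (m+p), (p+m+j+3) with hN2
  set D2 := ∏ j ∈ Finset.Icc (m+1) (m+p), (p+3+m-j) with hD2
  have hN : N1 = 2*(m+p+2) * N2 := by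
    rw [hN1, hN2, ← Finset.Ico_add_one_right_eq_Icc, Finset.prod_Ico_eq_prod_range,
      ← Finset.Ico_add_one_right_eq_Icc, Finset.prod_Ico_eq_prod_range,
      show (p+1+1) - 1 = p + 1 from by omega, show (m+p+1) - (m+1) = p from by omega,
      Finset.prod_range_succ]
    rw [Finset.prod_congr rfl (fun k _ => show 2*m+(1+k)+(p+2)+1 = p+m+(m+1+k)+3 by ring)]
    ring
  have hD1f : (p+1).factorial * D1 = (2*p+2).factorial := by
    rw [hD1, ← Finset.Ico_add_one_right_eq_Icc, Finset.prod_Ico_eq_prod_range,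
      show (p+1+1) - 1 = p + 1 from by omega,
      Finset.prod_congr rfl (fun k hk => show (1+k)+(p+2)-1 = (p+1)+1+k from by omega),
      fact_prod, show (p+1)+(p+1) = 2*p+2 from by ring]
  have hD2f : 2 * D2 = (p+2).factorial := by
    rw [hD2, ← Finset.Ico_add_one_right_eq_Icc, Finset.prod_Ico_eq_prod_range,
      show (m+p+1) - (m+1) = p from by omega]
    have : ∏ k ∈ Finset.range p, (p+3+m-(m+1+k)) = ∏ k ∈ Finset.range p, (k+3) := by
      rw [← Finset.prod_range_reflect (fun j => j + 3) p]
      refine Finset.prod_congr rfl (fun k hk => ?_)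
      rw [Finset.mem_range] at hk
      omega
    rw [this, Finset.prod_congr rfl (fun k _ => show k+3 = 2+1+k from by ring)]
    have h2 := fact_prod 2 p
    simpa [show (2:ℕ).factorial = 2 from rfl, show (2:ℕ)+p = p+2 from by ring] using h2
  have hC : (2*p+2).choose (p+1) * (p+1).factorial * (p+1).factorial
      = (2*p+2).factorial := by
    have h := Nat.choose_mul_factorial_mul_factorial (show p+1 ≤ 2*p+2 from by omega)
    rwa [show 2*p+2-(p+1) = p+1 from by omega] at h
  -- move to ℚ
  have hfs : ((p+2).factorial : ℚ) = ((p:ℚ)+2) * ((p+1).factorial : ℚ) := by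
    rw [show p+2 = (p+1)+1 from rfl, Nat.factorial_succ]; push_cast; ring
  have qN : (N1 : ℚ) = 2*((m:ℚ)+p+2) * N2 := by exact_mod_cast hN
  have qD1 : ((p+1).factorial : ℚ) * D1 = ((2*p+2).factorial : ℚ) := by exact_mod_cast hD1f
  have qD2 : 2 * (D2:ℚ) = ((p+2).factorial : ℚ) := by exact_mod_cast hD2f
  have qC : ((2*p+2).choose (p+1) : ℚ) * ((p+1).factorial : ℚ) * ((p+1).factorial : ℚ)
      = ((2*p+2).factorial : ℚ) := by exact_mod_cast hC
  have hF : ((p+1).factorial : ℚ) ≠ 0 := by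
    exact_mod_cast (Nat.factorial_pos (p+1)).ne'
  have qkey : ((2*p+2).choose (p+1) : ℚ) * 2 * D2 = ((p:ℚ)+2) * D1 := by
    apply mul_left_cancel₀ (mul_ne_zero hF hF)
    linear_combination (2*(D2:ℚ))*qC - ((p:ℚ)+2)*((p+1).factorial : ℚ)*qD1
      + ((2*p+2).factorial : ℚ)*qD2 + ((2*p+2).factorial : ℚ)*hfs
  have hD1pos : (0:ℚ) < D1 := by
    have : 0 < D1 := by
      rw [hD1]; exact Finset.prod_pos (fun i hi => by omega)
    exact_mod_cast this
  have hD2pos : (0:ℚ) < D2 := by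
    have : 0 < D2 := by
      rw [hD2]
      exact Finset.prod_pos (fun j hj => by
        rw [Finset.mem_Icc] at hj; omega)
    exact_mod_cast this
  field_simp
  linear_combination (((2*p+2).choose (p+1) : ℚ) * D2) * qN
    + (((m:ℚ)+p+2) * N2) * qkey


theorem stmt_16 (n m : ℕ) (hn : 2 ≤ n) :
    (∏ k ∈ Finset.Icc 1 (n - 2), ((1 : ℚ) / (k + 1) * ((2 * k).choose k : ℚ))) *
      ∏ i ∈ Finset.Icc 1 (n - 1), ∏ j ∈ Finset.Ioc i (n - 1),
        (((2 * m + i + j + 1 : ℕ) : ℚ) / ((i + j - 1 : ℕ) : ℚ)) =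
    ∏ j ∈ Finset.Icc (m + 1) (m + n - 2),
        ((1 : ℚ) / (2 * j + 1) * ((n + m + j).choose (2 * j) : ℚ)) := by
  induction n, hn using Nat.le_induction with
  | base =>
      simp [show m + 2 - 2 = m from by omega]
  | succ n hn ih =>
      obtain ⟨p, rfl⟩ : ∃ p, n = p + 2 := ⟨n - 2, by omega⟩
      have e1 : p + 2 + 1 - 2 = p + 1 := by omega
      have e2 : p + 2 + 1 - 1 = p + 2 := by omega
      have e3 : m + (p + 2 + 1) - 2 = m + p + 1 := by omega
      have e4 : p + 2 - 2 = p := rfl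
      have e5 : p + 2 - 1 = p + 1 := rfl
      have e6 : m + (p + 2) - 2 = m + p := by omega
      rw [e1, e2, e3] 
      rw [e4, e5, e6] at ih
      -- split LHS catalan product
      rw [Finset.prod_Icc_succ_top (show 1 ≤ p+1 by omega)]
      -- split LHS outer double product at i = p+2
      rw [Finset.prod_Icc_succ_top (show 1 ≤ p+2 by omega)]
      rw [show (∏ j ∈ Finset.Ioc (p+2) (p+2),
            ((2 * m + (p+2) + j + 1 : ℕ) : ℚ) / ((p+2 + j - 1 : ℕ) : ℚ)) = 1 by
          simp]
      -- split inner products at j = p+2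
      rw [show (∏ i ∈ Finset.Icc 1 (p+1), ∏ j ∈ Finset.Ioc i (p+2),
            ((2 * m + i + j + 1 : ℕ) : ℚ) / ((i + j - 1 : ℕ) : ℚ))
          = (∏ i ∈ Finset.Icc 1 (p+1), ∏ j ∈ Finset.Ioc i (p+1),
            ((2 * m + i + j + 1 : ℕ) : ℚ) / ((i + j - 1 : ℕ) : ℚ)) *
            ∏ i ∈ Finset.Icc 1 (p+1),
            ((2 * m + i + (p+2) + 1 : ℕ) : ℚ) / ((i + (p+2) - 1 : ℕ) : ℚ) by
          rw [← Finset.prod_mul_distrib]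
          refine Finset.prod_congr rfl (fun i hi => ?_)
          rw [Finset.mem_Icc] at hi
          exact Finset.prod_Ioc_succ_top (by omega) _]
      -- split RHS product at top
      rw [Finset.prod_Icc_succ_top (show m+1 ≤ m+p+1 by omega)]
      -- rewrite top RHS term to its value
      have hch : (p + 2 + 1 + m + (m + p + 1)).choose (2 * (m + p + 1))
          = (m+p+2)*(2*m+2*p+3) := by
        rw [show p + 2 + 1 + m + (m + p + 1) = 2*m+2*p+4 from by ring,
          show 2*(m+p+1) = (2*m+2*p+4) - 2 from by omega,
          Nat.choose_symm (by omega), Nat.choose_two_right]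
        have h4 : (2*m+2*p+4) * (2*m+2*p+4-1) = 2*((m+p+2)*(2*m+2*p+3)) := by
          rw [show 2*m+2*p+4-1 = 2*m+2*p+3 from by omega]; ring
        rw [h4, Nat.mul_div_cancel_left _ two_pos]
      have htop : (1 / (2 * ((m + p + 1 : ℕ) : ℚ) + 1) *
          ((p + 2 + 1 + m + (m + p + 1)).choose (2 * (m + p + 1)) : ℚ))
          = ((m:ℚ)+p+2) := by
        rw [hch]
        push_cast
        rw [div_mul_eq_mul_div, div_eq_iff (by positivity : (2*((m:ℚ)+(p:ℚ)+1)+1) ≠ 0)]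
        ring
      rw [htop]
      -- per-term ratio on RHS product
      have hratio : ∀ k ∈ Finset.Icc (m+1) (m+p),
          ((1:ℚ) / (2 * (k:ℚ) + 1) * ((p + 2 + 1 + m + k).choose (2 * k) : ℚ))
          = ((1:ℚ) / (2 * (k:ℚ) + 1) * ((p + 2 + m + k).choose (2 * k) : ℚ)) *
            (((p+m+k+3 : ℕ):ℚ)/((p+3+m-k : ℕ):ℚ)) := by
        intro k hk
        rw [Finset.mem_Icc] at hk
        have hsub : p+2+m+k+1-2*k = p+3+m-k := by omega
        have hne : ((p+3+m-k : ℕ):ℚ) ≠ 0 := Nat.cast_ne_zero.mpr (by omega)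
        have key := Nat.choose_mul_succ_eq (p+2+m+k) (2*k)
        rw [hsub] at key
        have keyq : ((p+2+m+k).choose (2*k) : ℚ) * ((p:ℚ)+2+(m:ℚ)+(k:ℚ)+1)
            = (((p+2+m+k+1).choose (2*k)) : ℚ) * ((p+3+m-k : ℕ):ℚ) := by
          exact_mod_cast key
        rw [show p+2+1+m+k = p+2+m+k+1 from by ring]
        have h2k : (2 * (k:ℚ) + 1) ≠ 0 := by positivity
        field_simp
        push_cast
        linear_combination (-1:ℚ)*keyq
      rw [Finset.prod_congr rfl hratio,
        show (∏ x ∈ Finset.Icc (m+1) (m+p),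
            (((1:ℚ)/(2*(x:ℚ)+1) * ((p+2+m+x).choose (2*x) : ℚ)) *
              (((p+m+x+3:ℕ):ℚ)/((p+3+m-x:ℕ):ℚ))))
          = (∏ x ∈ Finset.Icc (m+1) (m+p),
              ((1:ℚ)/(2*(x:ℚ)+1) * ((p+2+m+x).choose (2*x):ℚ))) *
            ∏ x ∈ Finset.Icc (m+1) (m+p), (((p+m+x+3:ℕ):ℚ)/((p+3+m-x:ℕ):ℚ))
          from Finset.prod_mul_distrib]
      rw [← ih]
      have hs := hstep p m
      linear_combination ((∏ k ∈ Finset.Icc 1 p, (1:ℚ) / (↑k + 1) * ↑((2 * k).choose k)) *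
        ∏ i ∈ Finset.Icc 1 (p + 1), ∏ j ∈ Finset.Ioc i (p + 1),
          ((2 * m + i + j + 1 : ℕ):ℚ) / ((i + j - 1 : ℕ):ℚ)) * hs
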